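/- Suppose r ≥ s ≥ 2 and B_{r,s}(p) − 2p + 1 > 0 for all p ∈ [0,1) (i.e., p_* = 1). Then −log(1 − p_k) = Ω(s^k): there exist a constant c > 0 and an integer K such that 1 − p_k ≤ exp(−c·s^k) for all k ≥ K. -/

import Mathlib

/-- `B r s p = ∑_{i=0}^{s-1} C(r,i) p^{r-i} (1-p)^i`, the probability that a
Binomial(r,p) random variable exceeds `r - s`. -/
noncomputable def B (r s : ℕ) (p : ℝ) : ℝ :=
  ∑ i ∈ Finset.range s, (r.choose i : ℝ) * p ^ (r - i) * (1 - p) ^ i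

/-- `f k (x, p) = (k+1) B_{r,s}(p) - k B_{r,s}(x) - 2x + 1`. -/
noncomputable def f (r s k : ℕ) (x p : ℝ) : ℝ :=
  ((k : ℝ) + 1) * B r s p - (k : ℝ) * B r s x - 2 * x + 1

/-- auxiliary for telescoping the derivative of `B` -/
noncomputable def Baux (r i : ℕ) (x : ℝ) : ℝ :=
  (r.choose i : ℝ) * i * x ^ (r - i) * (1 - x) ^ (i - 1)

lemma hasDerivAt_B (r s : ℕ) (hrs : s ≤ r) (x : ℝ) :
    HasDerivAt (B r s) (Baux r s x) x := by
  have hderiv : ∀ i ∈ Finset.range s,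
      HasDerivAt (fun y : ℝ => (r.choose i : ℝ) * y ^ (r - i) * (1 - y) ^ i)
        (Baux r (i+1) x - Baux r i x) x := by
    intro i hi
    have hi' : i < s := Finset.mem_range.mp hi
    have hir : i < r := lt_of_lt_of_le hi' hrs
    have h1 : HasDerivAt (fun y : ℝ => y ^ (r - i)) (((r - i : ℕ) : ℝ) * x ^ (r - i - 1)) x :=
      hasDerivAt_pow _ x
    have h2 : HasDerivAt (fun y : ℝ => (1 - y) ^ i) ((i : ℝ) * (1 - x) ^ (i - 1) * (-1)) x := by
      have := ((hasDerivAt_id x).const_sub (1:ℝ)).fun_pow i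
      simpa using this
    have h3 := (h1.const_mul ((r.choose i : ℝ))).fun_mul h2
    convert h3 using 1
    · rfl
    · rfl
    have hcast : ((r.choose (i+1) : ℝ)) * ((i:ℝ) + 1) = (r.choose i : ℝ) * ((r - i : ℕ) : ℝ) := by
      exact_mod_cast congrArg (Nat.cast (R := ℝ)) (Nat.choose_succ_right_eq r i)
    unfold Baux
    have e1 : r - (i+1) = r - i - 1 := by omega
    have e2 : (i + 1) - 1 = i := by omega
    rw [e1, e2]
    push_cast
    linear_combination (x ^ (r - i - 1) * (1 - x) ^ i) * hcast
  have hsum := HasDerivAt.fun_sum hderiv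
  have htel : ∑ i ∈ Finset.range s, (Baux r (i+1) x - Baux r i x) = Baux r s x - Baux r 0 x :=
    Finset.sum_range_sub (fun i => Baux r i x) s
  have h0 : Baux r 0 x = 0 := by simp [Baux]
  rw [htel, h0, sub_zero] at hsum
  exact hsum

lemma B_continuous (r s : ℕ) (hrs : s ≤ r) : Continuous (B r s) := by
  have : Differentiable ℝ (B r s) := fun x => (hasDerivAt_B r s hrs x).differentiableAt
  exact this.continuous

lemma B_mono (r s : ℕ) (hrs : s ≤ r) : MonotoneOn (B r s) (Set.Icc 0 1) := by
  apply monotoneOn_of_deriv_nonneg (convex_Icc 0 1)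
    ((B_continuous r s hrs).continuousOn)
  · intro x hx
    exact ((hasDerivAt_B r s hrs x).differentiableAt).differentiableWithinAt
  · intro x hx
    rw [interior_Icc] at hx
    rw [(hasDerivAt_B r s hrs x).deriv]
    unfold Baux
    have h1 : (0:ℝ) ≤ x := le_of_lt hx.1
    have h2 : (0:ℝ) ≤ 1 - x := by linarith [hx.2]
    positivity

noncomputable def Atail (r s : ℕ) (x : ℝ) : ℝ :=
  ∑ i ∈ Finset.Ico s (r+1), (r.choose i : ℝ) * x ^ (r - i) * (1 - x) ^ i

lemma B_add_A (r s : ℕ) (hrs : s ≤ r) (x : ℝ) : B r s x + Atail r s x = 1 := by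
  unfold B Atail
  rw [Finset.range_eq_Ico]
  rw [Finset.sum_Ico_consecutive _ (Nat.zero_le s) (by omega : s ≤ r + 1)]
  rw [← Finset.range_eq_Ico]
  have h := add_pow (1 - x) x r
  have h1 : ((1-x) + x) ^ r = 1 := by norm_num
  rw [h1] at h
  calc ∑ i ∈ Finset.range (r+1), (r.choose i : ℝ) * x ^ (r - i) * (1 - x) ^ i
      = ∑ m ∈ Finset.range (r+1), (1 - x) ^ m * x ^ (r - m) * (r.choose m : ℝ) := by
        apply Finset.sum_congr rfl
        intro i _
        ring
    _ = 1 := h.symm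

lemma Atail_nonneg (r s : ℕ) {x : ℝ} (hx : x ∈ Set.Icc (0:ℝ) 1) : 0 ≤ Atail r s x := by
  apply Finset.sum_nonneg
  intro i hi
  have h1 : (0:ℝ) ≤ x := hx.1
  have h2 : (0:ℝ) ≤ 1 - x := by linarith [hx.2]
  positivity

lemma B_nonneg (r s : ℕ) {x : ℝ} (hx : x ∈ Set.Icc (0:ℝ) 1) : 0 ≤ B r s x := by
  apply Finset.sum_nonneg
  intro i hi
  have h1 : (0:ℝ) ≤ x := hx.1
  have h2 : (0:ℝ) ≤ 1 - x := by linarith [hx.2]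
  positivity

lemma Atail_le (r s : ℕ) {x : ℝ} (hx : x ∈ Set.Icc (0:ℝ) 1) :
    Atail r s x ≤ 2 ^ r * (1 - x) ^ s := by
  have h1 : (0:ℝ) ≤ x := hx.1
  have h2 : (0:ℝ) ≤ 1 - x := by linarith [hx.2]
  have h3 : (1:ℝ) - x ≤ 1 := by linarith [hx.1]
  have step1 : Atail r s x ≤ ∑ i ∈ Finset.Ico s (r+1), (r.choose i : ℝ) * (1 - x) ^ s := by
    apply Finset.sum_le_sum
    intro i hi
    obtain ⟨his, hir⟩ := Finset.mem_Ico.mp hi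
    have hxp : x ^ (r - i) ≤ 1 := pow_le_one₀ h1 hx.2
    have hq : (1 - x) ^ i ≤ (1 - x) ^ s := pow_le_pow_of_le_one h2 h3 his
    have hc : (0:ℝ) ≤ (r.choose i : ℝ) := by positivity
    calc (r.choose i : ℝ) * x ^ (r - i) * (1 - x) ^ i
        ≤ (r.choose i : ℝ) * 1 * (1 - x) ^ i := by
          apply mul_le_mul_of_nonneg_right _ (by positivity)
          exact mul_le_mul_of_nonneg_left hxp hc
      _ ≤ (r.choose i : ℝ) * 1 * (1 - x) ^ s := by
          apply mul_le_mul_of_nonneg_left hq (by positivity)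
      _ = (r.choose i : ℝ) * (1 - x) ^ s := by ring
  have step2 : ∑ i ∈ Finset.Ico s (r+1), (r.choose i : ℝ) * (1 - x) ^ s
      ≤ (2:ℝ) ^ r * (1 - x) ^ s := by
    rw [← Finset.sum_mul]
    apply mul_le_mul_of_nonneg_right _ (by positivity)
    have hsub : ∑ i ∈ Finset.Ico s (r+1), (r.choose i : ℝ)
        ≤ ∑ i ∈ Finset.range (r+1), (r.choose i : ℝ) := by
      apply Finset.sum_le_sum_of_subset_of_nonneg
      · rw [Finset.range_eq_Ico]
        exact Finset.Ico_subset_Ico (Nat.zero_le s) le_rfl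
      · intro i _ _; positivity
    calc ∑ i ∈ Finset.Ico s (r+1), (r.choose i : ℝ) ≤ _ := hsub
      _ = (2:ℝ) ^ r := by exact_mod_cast congrArg (Nat.cast (R := ℝ)) (Nat.sum_range_choose r)
  linarith

set_option maxHeartbeats 1600000 in
/-- For `r ≥ s ≥ 2`: if `B_{r,s}(p) - 2p + 1 > 0` for all `p ∈ [0,1)`
(i.e. `p_* = 1`), then `-log(1 - p_k) = Ω(s^k)`: there are `c > 0` and `K` with
`1 - p_k ≤ exp(-c s^k)` for all `k ≥ K`. -/
theorem stmt_12 (r s : ℕ) (hs : 2 ≤ s) (hrs : s ≤ r) (p : ℕ → ℝ)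
    (hp0 : p 0 = 0)
    (hp : ∀ k, 1 ≤ k → p k ∈ Set.Ioo (0 : ℝ) 1 ∧ f r s k (p k) (p (k - 1)) = 0)
    (hpos : ∀ q ∈ Set.Ico (0 : ℝ) 1, 0 < B r s q - 2 * q + 1) :
    ∃ c : ℝ, 0 < c ∧ ∃ K : ℕ, ∀ k : ℕ, K ≤ k →
      1 - p k ≤ Real.exp (-(c * (s : ℝ) ^ k)) := by
  classical
  have hr2 : 2 ≤ r := le_trans hs hrs
  have hpIco : ∀ k, p k ∈ Set.Ico (0:ℝ) 1 := by
    intro k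
    rcases Nat.eq_zero_or_pos k with h | h
    · subst h; rw [hp0]; exact ⟨le_rfl, one_pos⟩
    · obtain ⟨⟨h1, h2⟩, _⟩ := hp k h
      exact ⟨le_of_lt h1, h2⟩
  have hpmem : ∀ k, p k ∈ Set.Icc (0:ℝ) 1 := fun k => ⟨(hpIco k).1, le_of_lt (hpIco k).2⟩
  have hqpos : ∀ k, 0 < 1 - p k := fun k => by have := (hpIco k).2; linarith
  have hq1 : ∀ k, 1 - p k ≤ 1 := fun k => by have := (hpIco k).1; linarith
  set a : ℕ → ℝ := fun k => 1 - B r s (p k) with ha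
  have ha_nonneg : ∀ k, 0 ≤ a k := by
    intro k
    have h1 := B_add_A r s hrs (p k)
    have h2 := Atail_nonneg r s (hpmem k)
    simp only [ha]
    linarith
  have ha_le1 : ∀ k, a k ≤ 1 := by
    intro k
    have := B_nonneg r s (hpmem k)
    simp only [ha]
    linarith
  have ha_le : ∀ k, a k ≤ 2 ^ r * (1 - p k) ^ s := by
    intro k
    have h1 := B_add_A r s hrs (p k)
    have h2 := Atail_le r s (hpmem k)
    simp only [ha]
    linarith
  have key : ∀ m : ℕ, ((m:ℝ) + 2) * a m = ((m:ℝ) + 1) * a (m+1) + 2 * (1 - p (m+1)) := by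
    intro m
    obtain ⟨_, hf⟩ := hp (m+1) (by omega)
    simp only [Nat.add_sub_cancel] at hf
    unfold f at hf
    simp only [ha]
    push_cast at hf ⊢
    nlinarith [hf]
  have hgpos : ∀ k, 0 < 2 * (1 - p k) - a k := by
    intro k
    have := hpos (p k) (hpIco k)
    simp only [ha]
    linarith
  have hstep : ∀ m, a m - a (m+1) = (2 * (1 - p (m+1)) - a (m+1)) / ((m:ℝ) + 2) := by
    intro m
    have h := key m
    have hm2 : ((m:ℝ) + 2) ≠ 0 := by positivity
    field_simp
    linarith
  have hmono_succ : ∀ m, p m ≤ p (m+1) := by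
    intro m
    by_contra h
    push_neg at h
    have hB : B r s (p (m+1)) ≤ B r s (p m) := B_mono r s hrs (hpmem (m+1)) (hpmem m) (le_of_lt h)
    have haM : a m ≤ a (m+1) := by simp only [ha]; linarith
    have hmul : ((m:ℝ)+1) * a m ≤ ((m:ℝ)+1) * a (m+1) :=
      mul_le_mul_of_nonneg_left haM (by positivity)
    have hk := key m
    have hg := hgpos (m+1)
    linarith
  have hpmono : Monotone p := monotone_nat_of_le_succ hmono_succ
  -- the supremum of p is 1
  have hbdd : BddAbove (Set.range p) := ⟨1, by rintro x ⟨k, rfl⟩; exact (hpmem k).2⟩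
  set L := ⨆ k, p k with hLdef
  have hpL : ∀ k, p k ≤ L := fun k => le_ciSup hbdd k
  have hL1 : L ≤ 1 := ciSup_le (fun k => (hpmem k).2)
  have hL0 : 0 ≤ L := by have := hpL 0; rw [hp0] at this; exact this
  have hLeq : L = 1 := by
    by_contra hne
    have hL : L < 1 := lt_of_le_of_ne hL1 hne
    have hcomp : IsCompact (Set.Icc (0:ℝ) L) := isCompact_Icc
    have hne' : (Set.Icc (0:ℝ) L).Nonempty := ⟨0, le_rfl, hL0⟩
    have hGcont : ContinuousOn (fun x => B r s x - 2*x + 1) (Set.Icc (0:ℝ) L) :=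
      (((B_continuous r s hrs).sub (continuous_const.mul continuous_id)).add
        continuous_const).continuousOn
    obtain ⟨x0, hx0mem, hx0min⟩ := hcomp.exists_isMinOn hne' hGcont
    set δ := B r s x0 - 2*x0 + 1 with hδ
    have hδpos : 0 < δ := hpos x0 ⟨hx0mem.1, lt_of_le_of_lt hx0mem.2 hL⟩
    have hterm : ∀ m : ℕ, δ / ((m:ℝ)+2) ≤ a m - a (m+1) := by
      intro m
      rw [hstep m]
      have hpmem' : p (m+1) ∈ Set.Icc (0:ℝ) L := ⟨(hpmem (m+1)).1, hpL (m+1)⟩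
      have hmin := hx0min hpmem'
      simp only [Set.mem_setOf_eq] at hmin
      have hGval : B r s (p (m+1)) - 2*(p (m+1)) + 1 = 2*(1 - p (m+1)) - a (m+1) := by
        simp only [ha]; ring
      have hnum : δ ≤ 2*(1 - p (m+1)) - a (m+1) := by
        rw [← hGval]; exact hmin
      gcongr
    have htel : ∀ nn : ℕ, ∑ m ∈ Finset.range nn, δ/((m:ℝ)+2) ≤ 1 := by
      intro nn
      have h1 : ∑ m ∈ Finset.range nn, (a m - a (m+1)) = a 0 - a nn :=
        Finset.sum_range_sub' a nn
      have h2 : ∑ m ∈ Finset.range nn, δ/((m:ℝ)+2)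
          ≤ ∑ m ∈ Finset.range nn, (a m - a (m+1)) :=
        Finset.sum_le_sum (fun m _ => hterm m)
      have h3 := ha_le1 0
      have h4 := ha_nonneg nn
      linarith
    obtain ⟨nn, hnn⟩ : ∃ nn, 1 + 2/δ < ∑ i ∈ Finset.range nn, (1:ℝ)/(i+1) :=
      (Real.tendsto_sum_range_one_div_nat_succ_atTop.eventually_gt_atTop (1 + 2/δ)).exists
    match nn with
    | 0 =>
      simp only [Finset.range_zero, Finset.sum_empty] at hnn
      have : 0 < 2/δ := by positivity
      linarith
    | (m0+1) =>
      have hsplit := Finset.sum_range_succ' (fun i : ℕ => (1:ℝ)/((i:ℝ)+1)) m0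
      push_cast at hsplit
      have heq : ∑ m ∈ Finset.range m0, (1:ℝ)/((m:ℝ)+1+1)
          = ∑ m ∈ Finset.range m0, (1:ℝ)/((m:ℝ)+2) := by
        apply Finset.sum_congr rfl
        intro i _
        norm_num [add_assoc]
      rw [heq] at hsplit
      norm_num at hsplit
      have hgt : 2/δ < ∑ m ∈ Finset.range m0, (1:ℝ)/((m:ℝ)+2) := by
        simp only [one_div] at hnn ⊢
        rw [hsplit] at hnn
        linarith
      have hle := htel m0
      have hmulsum : ∑ m ∈ Finset.range m0, δ/((m:ℝ)+2)
          = δ * ∑ m ∈ Finset.range m0, (1:ℝ)/((m:ℝ)+2) := by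
        rw [Finset.mul_sum]
        apply Finset.sum_congr rfl
        intro i _
        ring
      have h2δ : δ * (2/δ) = 2 := by field_simp
      nlinarith [mul_lt_mul_of_pos_left hgt hδpos]
  have hreach : ∀ ε : ℝ, 0 < ε → ∃ K : ℕ, ∀ k, K ≤ k → 1 - p k < ε := by
    intro ε hε
    have h1 : 1 - ε < L := by rw [hLeq]; linarith
    obtain ⟨j, hj⟩ := exists_lt_of_lt_ciSup h1
    exact ⟨j, fun k hk => by have := hpmono hk; linarith⟩
  clear_value a L
  clear hLdef hpL hL1 hL0 hLeq hp hp0 hpos hstep hgpos ha_le1 L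
    -- one-step recurrence
  have hrec : ∀ m : ℕ, 1 - p (m+1) ≤ ((m:ℝ)+2) * (2 ^ r * (1 - p m) ^ s) := by
    intro m
    have hk := key m
    have h1 : 0 ≤ ((m:ℝ)+1) * a (m+1) := mul_nonneg (by positivity) (ha_nonneg _)
    have h3 : ((m:ℝ)+2) * a m ≤ ((m:ℝ)+2) * (2^r * (1 - p m)^s) :=
      mul_le_mul_of_nonneg_left (ha_le m) (by positivity)
    linarith [hqpos (m+1)]
  have hlog2 : Real.log 2 ≤ 1 := by
    have := Real.log_le_sub_one_of_pos (show (0:ℝ) < 2 by norm_num)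
    linarith
  have hlog2' : 0 ≤ Real.log 2 := Real.log_nonneg one_le_two
  have hlogrec : ∀ m : ℕ,
      (s:ℝ) * (-Real.log (1 - p m)) - (Real.log ((m:ℝ)+2) + r) ≤ -Real.log (1 - p (m+1)) := by
    intro m
    have h1 := hrec m
    have hq0 := hqpos m
    have hlg := Real.log_le_log (hqpos (m+1)) h1
    rw [Real.log_mul (by positivity) (by positivity),
      Real.log_mul (by positivity) (by positivity),
      Real.log_pow, Real.log_pow] at hlg
    have hrl : (r:ℝ) * Real.log 2 ≤ (r:ℝ) := by
      nlinarith [Nat.cast_nonneg (α := ℝ) r]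
    linarith
  -- regime where a k ≤ 1 - p k
  obtain ⟨N1, hN1⟩ := hreach ((2:ℝ)^r)⁻¹ (by positivity)
  obtain ⟨N2, hN2⟩ := hreach (Real.exp (-((r:ℝ)+2))) (Real.exp_pos _)
  set N' : ℕ := max (max N1 N2) 2 with hN'def
  have hN'N1 : N1 ≤ N' := le_trans (le_max_left N1 N2) (le_max_left _ 2)
  have hN'N2 : N2 ≤ N' := le_trans (le_max_right N1 N2) (le_max_left _ 2)
  clear_value N'
  clear hN'def
  have hsmall : ∀ k, N1 ≤ k → a k ≤ 1 - p k := by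
    intro k hk
    have hq := hN1 k hk
    have hq0 := le_of_lt (hqpos k)
    have h1 : (1 - p k)^s ≤ (1 - p k)^2 := pow_le_pow_of_le_one hq0 (hq1 k) hs
    have h2 : (2:ℝ)^r * (1 - p k) ≤ 1 := by
      have h := mul_lt_mul_of_pos_left hq (show (0:ℝ) < 2^r by positivity)
      rw [mul_inv_cancel₀ (ne_of_gt (show (0:ℝ) < (2:ℝ)^r by positivity))] at h
      linarith
    have h3 := ha_le k
    have h4 : (2:ℝ)^r * (1 - p k)^s ≤ (2:ℝ)^r * (1 - p k)^2 :=
      mul_le_mul_of_nonneg_left h1 (by positivity)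
    have h5 : ((2:ℝ)^r * (1 - p k)) * (1 - p k) ≤ 1 * (1 - p k) :=
      mul_le_mul_of_nonneg_right h2 hq0
    nlinarith
  -- telescoping chain bound
  have hchain : ∀ k, N' ≤ k → ∀ d : ℕ,
      (d:ℝ) * (1 - p (k+d)) ≤ ((k:ℝ) + d + 1) * (a k - a (k+d)) := by
    intro k hk d
    induction d with
    | zero => simp
    | succ d ih =>
      have hkey := key (k+d)
      push_cast at hkey
      have hY : ((k:ℝ)+(d:ℝ)+2)*(a (k+d) - a (k+d+1)) = 2*(1 - p (k+d+1)) - a (k+d+1) := by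
        linear_combination hkey
      have hsm : a (k+d+1) ≤ 1 - p (k+d+1) := hsmall (k+d+1) (by omega)
      have hq0 := le_of_lt (hqpos (k+d))
      have hd0 : (0:ℝ) ≤ (d:ℝ) := Nat.cast_nonneg d
      have hden : (0:ℝ) < (k:ℝ)+(d:ℝ)+1 := by positivity
      have hX0 : 0 ≤ a k - a (k+d) := by
        nlinarith [ih, mul_nonneg hd0 hq0]
      have hdq : (d:ℝ)*(1 - p (k+d+1)) ≤ (d:ℝ)*(1 - p (k+d)) :=
        mul_le_mul_of_nonneg_left (by linarith [hmono_succ (k+d)]) hd0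
      have e : k + (d+1) = k + d + 1 := by omega
      rw [e]
      push_cast
      have hdecomp : ((k:ℝ)+(d:ℝ)+1+1)*(a k - a (k+d+1))
          = ((k:ℝ)+(d:ℝ)+1)*(a k - a (k+d)) + (a k - a (k+d))
            + (((k:ℝ)+(d:ℝ)+2)*(a (k+d) - a (k+d+1))) := by ring
      linarith [ih, hX0, hY, hsm, hdq]
  -- doubling bound
  have hdbl : ∀ k, N' ≤ k → 1 - p (2*k+1) ≤ 2^(r+1) * (1 - p k)^2 := by
    intro k hk
    have hc := hchain k hk (k+1)
    have e : k + (k+1) = 2*k+1 := by omega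
    rw [e] at hc
    push_cast at hc
    have ha2 : 0 ≤ a (2*k+1) := ha_nonneg (2*k+1)
    have hk1 : (0:ℝ) < (k:ℝ)+1 := by positivity
    have h1 : ((k:ℝ)+1)*(1 - p (2*k+1)) ≤ ((k:ℝ)+1)*(2*a k) := by
      have hprod : 0 ≤ ((k:ℝ)+(k:ℝ)+1+1) * (a (2*k+1)) := by positivity
      nlinarith [hc]
    have h2 : 1 - p (2*k+1) ≤ 2 * a k := (mul_le_mul_iff_right₀ hk1).mp h1
    have h3 := ha_le k
    have h4 : (1 - p k)^s ≤ (1 - p k)^2 :=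
      pow_le_pow_of_le_one (le_of_lt (hqpos k)) (hq1 k) hs
    have h5 : (2:ℝ)^r * (1 - p k)^s ≤ (2:ℝ)^r * (1 - p k)^2 :=
      mul_le_mul_of_nonneg_left h4 (by positivity)
    have h7 : (2:ℝ)^(r+1)*(1 - p k)^2 = 2*((2:ℝ)^r*(1 - p k)^2) := by rw [pow_succ]; ring
    linarith
  -- the dyadic subsequence
  set n : ℕ → ℕ := fun j => 2^j * (N'+1) - 1 with hn
  have hn0 : n 0 = N' := by simp [hn]
  have hnstep : ∀ j, n (j+1) = 2 * n j + 1 := by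
    intro j
    have h1 : 0 < 2^j * (N'+1) := Nat.mul_pos (Nat.pow_pos (n := j) (by norm_num)) (Nat.succ_pos _)
    have h2 : 2^(j+1) * (N'+1) = 2 * (2^j * (N'+1)) := by rw [pow_succ]; ring
    simp only [hn]
    rw [h2]
    omega
  have hnge : ∀ j, N' ≤ n j := by
    intro j
    have h1 : 0 < 2^j := Nat.pow_pos (n := j) (by norm_num)
    have h2 : N'+1 ≤ 2^j * (N'+1) := Nat.le_mul_of_pos_left (N'+1) h1
    simp only [hn]
    omega
  have hiter : ∀ j, ((r:ℝ)+1)*Real.log 2 + 2^j ≤ -Real.log (1 - p (n j)) := by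
    intro j
    induction j with
    | zero =>
      rw [hn0]
      have hq := hN2 N' hN'N2
      have hl := Real.log_le_log (hqpos N') (le_of_lt hq)
      rw [Real.log_exp] at hl
      have hr1 : ((r:ℝ)+1)*Real.log 2 ≤ (r:ℝ)+1 := by
        nlinarith [Nat.cast_nonneg (α := ℝ) r]
      simp only [pow_zero]
      linarith
    | succ j ih =>
      have hd := hdbl (n j) (hnge j)
      rw [← hnstep j] at hd
      have hq0 := hqpos (n j)
      have hq0' := hqpos (n (j+1))
      have hl := Real.log_le_log hq0' hd
      rw [Real.log_mul (by positivity) (by positivity), Real.log_pow, Real.log_pow] at hl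
      push_cast at hl
      have h2j : (2:ℝ)^(j+1) = 2*2^j := by ring
      linarith
  -- choice of the base index K
  set j0 : ℕ := 2*N' + r + 11 with hj0def
  set K : ℕ := n j0 with hKdef
  have hnat : 2*j0 + (2*N' + r + 7) ≤ 2^j0 := by
    have h := Nat.lt_two_pow_self (n := 2*N' + r + 7)
    have e : j0 = (2*N'+r+7)+4 := by omega
    have h2 : (2:ℕ)^j0 = 2^(2*N'+r+7) * 16 := by rw [e, pow_add]; norm_num
    omega
  have hKb : K + 2 ≤ 2^j0 * (N'+2) := by
    have h1 : 0 < 2^j0 := Nat.pow_pos (n := j0) (by norm_num)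
    have h2 : 2^j0*(N'+2) = 2^j0*(N'+1) + 2^j0 := by ring
    have h3 : K = 2^j0*(N'+1) - 1 := rfl
    have h4 : N'+1 ≤ 2^j0 * (N'+1) := Nat.le_mul_of_pos_left (N'+1) h1
    omega
  have hiterK : ((r:ℝ)+1)*Real.log 2 + 2^j0 ≤ -Real.log (1 - p K) := by
    rw [hKdef]; exact hiter j0
  clear_value K
  clear hKdef hiter hnstep hn0 hnge hdbl hchain hsmall
  clear_value n
  clear n hn
  have hlogK : Real.log ((K:ℝ)+2) ≤ (j0:ℝ) + (N':ℝ) + 1 := by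
    have hcast : ((K:ℝ)+2) ≤ (((2^j0 * (N'+2) : ℕ)):ℝ) := by exact_mod_cast hKb
    have hl := Real.log_le_log (by positivity) hcast
    push_cast at hl
    rw [Real.log_mul (by positivity) (by positivity), Real.log_pow] at hl
    have h2 : Real.log ((N':ℝ)+2) ≤ (N':ℝ)+1 := by
      have := Real.log_le_sub_one_of_pos (show (0:ℝ) < (N':ℝ)+2 by positivity)
      linarith
    have h3 : (j0:ℝ)*Real.log 2 ≤ (j0:ℝ) := by
      nlinarith [Nat.cast_nonneg (α := ℝ) j0]
    linarith
  have hbase : 2*Real.log ((K:ℝ)+2) + (r:ℝ) + 5 ≤ -Real.log (1 - p K) := by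
    have h1 := hiterK
    have h3 : ((2*j0 + (2*N' + r + 7) : ℕ):ℝ) ≤ (((2^j0 : ℕ)):ℝ) := by exact_mod_cast hnat
    push_cast at h3
    have h4 : 0 ≤ ((r:ℝ)+1)*Real.log 2 := by positivity
    have hj0r : ((j0:ℕ):ℝ) = 2*(N':ℝ)+(r:ℝ)+11 := by rw [hj0def]; push_cast; ring
    linarith [hlogK, hj0r]
  -- the main induction
  have hs2 : (2:ℝ) ≤ (s:ℝ) := by exact_mod_cast hs
  have hspos : (0:ℝ) < (s:ℝ) := by linarith
  have hspow_pos : (0:ℝ) < (s:ℝ)^K := by positivity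
  refine ⟨((s:ℝ)^K)⁻¹, inv_pos.mpr hspow_pos, K, ?_⟩
  set c : ℝ := ((s:ℝ)^K)⁻¹ with hc
  have hcpos : 0 < c := inv_pos.mpr hspow_pos
  have hcK : c * (s:ℝ)^K = 1 := inv_mul_cancel₀ (ne_of_gt hspow_pos)
  clear_value c
  clear hc
  have hmain : ∀ k, K ≤ k →
      c*(s:ℝ)^k + 2*Real.log ((k:ℝ)+2) + (r:ℝ) + 4 ≤ -Real.log (1 - p k) := by
    intro k hk
    induction k, hk using Nat.le_induction with
    | base =>
      rw [hcK]
      linarith [hbase]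
    | succ k hk ih =>
      have hlr := hlogrec k
      have hLg : 0 ≤ Real.log ((k:ℝ)+2) :=
        Real.log_nonneg (by linarith [Nat.cast_nonneg (α := ℝ) k])
      have hmul := mul_le_mul_of_nonneg_left ih (le_of_lt hspos)
      have hpow : (s:ℝ)^(k+1) = (s:ℝ)^k * s := pow_succ _ _
      have hcs : c*(s:ℝ)^(k+1) = c*((s:ℝ)^k * s) := by rw [hpow]
      have hlog3 : Real.log ((k:ℝ)+1+2) ≤ Real.log ((k:ℝ)+2) + 1 := by
        have ha1 : ((k:ℝ)+1+2) ≤ 2*((k:ℝ)+2) := by linarith [Nat.cast_nonneg (α := ℝ) k]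
        have ha2 := Real.log_le_log (by positivity) ha1
        rw [Real.log_mul (by norm_num) (by positivity)] at ha2
        linarith
      have hsLg : 2*Real.log ((k:ℝ)+2) ≤ (s:ℝ)*Real.log ((k:ℝ)+2) := by nlinarith
      have hsr : 2*(r:ℝ) ≤ (s:ℝ)*(r:ℝ) := by nlinarith [Nat.cast_nonneg (α := ℝ) r]
      have hs4 : (8:ℝ) ≤ (s:ℝ)*4 := by linarith
      push_cast
      linarith [hmul, hlr, hlog3, hcs, hsLg, hsr, hs4, hLg]
  intro k hk
  have h1 := hmain k hk
  have hLg : 0 ≤ Real.log ((k:ℝ)+2) :=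
    Real.log_nonneg (by linarith [Nat.cast_nonneg (α := ℝ) k])
  have hr0 : (0:ℝ) ≤ (r:ℝ) := Nat.cast_nonneg r
  have h3 : Real.log (1 - p k) ≤ -(c*(s:ℝ)^k) := by linarith
  calc 1 - p k = Real.exp (Real.log (1 - p k)) := (Real.exp_log (hqpos k)).symm
    _ ≤ Real.exp (-(c*(s:ℝ)^k)) := Real.exp_le_exp.mpr h3
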